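/- Let X be a compact metric space and for each N let H^{(N)} : X^N → ℝ be a symmetric lower semicontinuous function. Fix u_* ∈ C⁰(X) and, for each N, let x_*^{(N)} ∈ X^N be a minimizer on X^N of the function (x₁,…,x_N) ↦ H^{(N)}(x₁,…,x_N) + u_*(x₁) + ⋯ + u_*(x_N). Assume that for every u ∈ C⁰(X) the limit 𝓕(u) := lim_{N→∞} (1/N) inf_{X^N} ( H^{(N)} + u(x₁) + ⋯ + u(x_N) ) exists in ℝ, and that 𝓕 is Gateaux differentiable at u_* with differential d𝓕_{u_*} ∈ M(X). Then the empirical measures δ_N(x_*^{(N)}) converge to d𝓕_{u_*} in the weak-* topology of M(X). -/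
import Mathlib


open MeasureTheory Filter

/-- Convergence of minimizers ("abstract Fekete points"): if
`x_*^{(N)}` minimizes `H^{(N)} + u_*(x₁) + ⋯ + u_*(x_N)` on `X^N`, the limits
`𝓕(u) := lim_N (1/N) inf_{X^N} (H^{(N)} + Σᵢ u(xᵢ))` exist, and `𝓕` is Gateaux
differentiable at `u_*` with differential `L ∈ M(X)`, then the empirical measures
`δ_N(x_*^{(N)})` converge weak-* to `L`. -/
theorem stmt3 {X : Type*} [MetricSpace X] [CompactSpace X]
    (H : (N : ℕ) → (Fin N → X) → ℝ)
    (hsym : ∀ (N : ℕ) (σ : Equiv.Perm (Fin N)) (x : Fin N → X), H N (x ∘ σ) = H N x)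
    (hlsc : ∀ N, LowerSemicontinuous (H N))
    (ustar : C(X, ℝ))
    (xstar : (N : ℕ) → (Fin N → X))
    (hmin : ∀ (N : ℕ) (y : Fin N → X),
      H N (xstar N) + ∑ i : Fin N, ustar (xstar N i) ≤ H N y + ∑ i : Fin N, ustar (y i))
    (F : C(X, ℝ) → ℝ)
    (hF : ∀ u : C(X, ℝ),
      Tendsto (fun N : ℕ =>
          (sInf (Set.range fun y : Fin N → X => H N y + ∑ i : Fin N, u (y i))) / N)
        atTop (nhds (F u)))
    (L : C(X, ℝ) →L[ℝ] ℝ)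
    (hGat : ∀ v : C(X, ℝ), HasDerivAt (fun t : ℝ => F (ustar + t • v)) (L v) 0) :
    ∀ v : C(X, ℝ),
      Tendsto (fun N : ℕ => (∑ i : Fin N, v (xstar N i)) / N) atTop (nhds (L v)) := by
  intro v
  -- key inequality on the infima
  have key : ∀ (t : ℝ) (N : ℕ),
      sInf (Set.range fun y : Fin N → X => H N y + ∑ i : Fin N, (ustar + t • v) (y i))
        ≤ sInf (Set.range fun y : Fin N → X => H N y + ∑ i : Fin N, ustar (y i))
          + t * ∑ i : Fin N, v (xstar N i) := by
    intro t N
    have hb : BddBelow (Set.range fun y : Fin N → X =>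
        H N y + ∑ i : Fin N, (ustar + t • v) (y i)) := by
      refine ⟨H N (xstar N) + ∑ i : Fin N, ustar (xstar N i) - N * (|t| * ‖v‖), ?_⟩
      rintro _ ⟨y, rfl⟩
      have h1 := hmin N y
      have h2 : ∀ i : Fin N, -(|t| * ‖v‖) ≤ t * v (y i) := by
        intro i
        have : |t * v (y i)| ≤ |t| * ‖v‖ := by
          rw [abs_mul]
          exact mul_le_mul_of_nonneg_left (by simpa using (v.norm_coe_le_norm (y i)))
            (abs_nonneg t)
        linarith [neg_abs_le (t * v (y i))]
      have h3 : -(N * (|t| * ‖v‖)) ≤ ∑ i : Fin N, t * v (y i) := by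
        calc -(N * (|t| * ‖v‖)) = ∑ _i : Fin N, -(|t| * ‖v‖) := by
              simp [Finset.sum_const, mul_comm]
          _ ≤ _ := Finset.sum_le_sum fun i _ => h2 i
      have heq : H N y + ∑ i : Fin N, (ustar + t • v) (y i)
          = H N y + ∑ i : Fin N, ustar (y i) + ∑ i : Fin N, t * v (y i) := by
        simp [ContinuousMap.add_apply, Finset.sum_add_distrib]; ring
      show _ ≤ H N y + ∑ i : Fin N, (ustar + t • v) (y i)
      rw [heq]
      linarith
    have heq : sInf (Set.range fun y : Fin N → X => H N y + ∑ i : Fin N, ustar (y i))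
        = H N (xstar N) + ∑ i : Fin N, ustar (xstar N i) := by
      refine le_antisymm
        (csInf_le ⟨H N (xstar N) + ∑ i : Fin N, ustar (xstar N i), ?_⟩ ⟨xstar N, rfl⟩)
        (le_csInf ⟨_, ⟨xstar N, rfl⟩⟩ ?_)
      · rintro _ ⟨y, rfl⟩; exact hmin N y
      · rintro _ ⟨y, rfl⟩; exact hmin N y
    rw [heq]
    have h4 : (fun y : Fin N → X => H N y + ∑ i : Fin N, (ustar + t • v) (y i)) (xstar N)
        = (H N (xstar N) + ∑ i : Fin N, ustar (xstar N i)) + t * ∑ i : Fin N, v (xstar N i) := by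
      simp [ContinuousMap.add_apply, Finset.sum_add_distrib, Finset.mul_sum]
      ring
    calc sInf _ ≤ _ := csInf_le hb ⟨xstar N, rfl⟩
      _ = _ := h4
  -- divided version (opaque abbreviations)
  obtain ⟨A, hA⟩ : ∃ A : ℝ → ℕ → ℝ, ∀ (t : ℝ) (N : ℕ),
      A t N = (sInf (Set.range fun y : Fin N → X =>
        H N y + ∑ i : Fin N, (ustar + t • v) (y i))) / N := ⟨_, fun _ _ => rfl⟩
  obtain ⟨B, hB⟩ : ∃ B : ℕ → ℝ, ∀ N : ℕ,
      B N = (sInf (Set.range fun y : Fin N → X =>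
        H N y + ∑ i : Fin N, ustar (y i))) / N := ⟨_, fun _ => rfl⟩
  obtain ⟨S, hS⟩ : ∃ S : ℕ → ℝ, ∀ N : ℕ,
      S N = (∑ i : Fin N, v (xstar N i)) / N := ⟨_, fun _ => rfl⟩
  have hgoal : (fun N : ℕ => (∑ i : Fin N, v (xstar N i)) / N) = S :=
    funext fun N => (hS N).symm
  rw [hgoal]
  have key2 : ∀ (t : ℝ) (N : ℕ), A t N ≤ B N + t * S N := by
    intro t N
    rw [hA, hB, hS]
    rcases Nat.eq_zero_or_pos N with h0 | hpos
    · subst h0; simp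
    · have hN : (0:ℝ) < N := by exact_mod_cast hpos
      have h := div_le_div_of_nonneg_right (key t N) hN.le
      calc _ ≤ _ := h
        _ = _ := by field_simp
  have hAt : ∀ t : ℝ, Tendsto (fun N => A t N) atTop (nhds (F (ustar + t • v))) := by
    intro t
    have := hF (ustar + t • v)
    simpa only [← hA t] using this
  have hBt : Tendsto B atTop (nhds (F ustar)) := by
    have := hF ustar
    simpa only [← hB] using this
  -- derivative input
  have hslope : Tendsto (fun t : ℝ => (F (ustar + t • v) - F ustar) / t)
      (nhdsWithin 0 {(0:ℝ)}ᶜ) (nhds (L v)) := by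
    have h := hasDerivAt_iff_tendsto_slope.mp (hGat v)
    have heq : (slope (fun t : ℝ => F (ustar + t • v)) 0)
        = fun t : ℝ => (F (ustar + t • v) - F ustar) / t := by
      funext t
      simp [slope_def_field, sub_zero, zero_smul]
    rwa [heq] at h
  rw [Metric.tendsto_atTop]
  intro ε hε
  have hε4 : 0 < ε / 4 := by linarith
  have hev : ∀ᶠ t in nhdsWithin (0:ℝ) {(0:ℝ)}ᶜ,
      |(F (ustar + t • v) - F ustar) / t - L v| < ε / 4 :=
    hslope.eventually (eventually_abs_sub_lt (L v) hε4)
  obtain ⟨δ, hδ, hball⟩ := Metric.mem_nhdsWithin_iff.mp hev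
  obtain ⟨t₀, ht₀, htδ⟩ : ∃ t : ℝ, 0 < t ∧ t < δ := ⟨δ / 2, by positivity, by linarith⟩
  have hmem : ∀ t : ℝ, t ≠ 0 → |t| < δ →
      |(F (ustar + t • v) - F ustar) / t - L v| < ε / 4 := by
    intro t htne htlt
    exact hball ⟨by simpa [Metric.mem_ball, Real.dist_eq] using htlt, htne⟩
  have hp := hmem t₀ ht₀.ne' (by rw [abs_of_pos ht₀]; exact htδ)
  have hm := hmem (-t₀) (neg_ne_zero.mpr ht₀.ne') (by rw [abs_neg, abs_of_pos ht₀]; exact htδ)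
  obtain ⟨Dp, hDp⟩ : ∃ D : ℝ, D = F (ustar + t₀ • v) - F ustar := ⟨_, rfl⟩
  obtain ⟨Dm, hDm⟩ : ∃ D : ℝ, D = F (ustar + (-t₀) • v) - F ustar := ⟨_, rfl⟩
  rw [← hDp] at hp
  rw [← hDm] at hm
  have hcp : Tendsto (fun N => A t₀ N - B N) atTop (nhds Dp) := by
    rw [hDp]; exact (hAt t₀).sub hBt
  have hcm : Tendsto (fun N => A (-t₀) N - B N) atTop (nhds Dm) := by
    rw [hDm]; exact (hAt (-t₀)).sub hBt
  have evp : ∀ᶠ N in atTop, A t₀ N - B N > Dp - (ε / 4) * t₀ :=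
    hcp.eventually (eventually_gt_nhds (by nlinarith [mul_pos hε4 ht₀]))
  have evm : ∀ᶠ N in atTop, A (-t₀) N - B N > Dm - (ε / 4) * t₀ :=
    hcm.eventually (eventually_gt_nhds (by nlinarith [mul_pos hε4 ht₀]))
  obtain ⟨N₀, hN₀⟩ := (evp.and evm).exists_forall_of_atTop
  refine ⟨N₀, fun n hn => ?_⟩
  obtain ⟨h1, h2⟩ := hN₀ n hn
  have k1 := key2 t₀ n
  have k2 := key2 (-t₀) n
  rw [Real.dist_eq, abs_lt]
  obtain ⟨q, hq⟩ : ∃ q : ℝ, q = Dp / t₀ := ⟨_, rfl⟩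
  obtain ⟨r, hr⟩ : ∃ r : ℝ, r = Dm / (-t₀) := ⟨_, rfl⟩
  rw [← hq] at hp
  rw [← hr] at hm
  have e1 : Dp = q * t₀ := by rw [hq]; exact (div_mul_cancel₀ _ ht₀.ne').symm
  have e2 : Dm = r * (-t₀) := by
    rw [hr]; exact (div_mul_cancel₀ _ (neg_ne_zero.mpr ht₀.ne')).symm
  rw [abs_lt] at hp hm
  have m1 := mul_lt_mul_of_pos_right hp.1 ht₀
  have m2 := mul_lt_mul_of_pos_right hm.2 ht₀
  constructor
  · have hlt : t₀ * (-(ε / 2)) < t₀ * (S n - L v) := by nlinarith [m1, k1, h1, e1]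
    have := (mul_lt_mul_iff_right₀ ht₀).mp hlt
    linarith
  · have hlt : t₀ * (S n - L v) < t₀ * (ε / 2) := by nlinarith [m2, k2, h2, e2]
    have := (mul_lt_mul_iff_right₀ ht₀).mp hlt
    linarith
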